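/- Let a < b be two distinct characters of Σ, let x ≥ 2, and let T_x = a b a^2 b a^3 b ⋯ a^x b # (of length x(x+3)/2 + 1). The LZ77 factorization of T_x has exactly x + 3 factors: z_{T_x} = x + 3. -/

import Mathlib

/-! Basic definitions: strings are lists of naturals; the separator `#` is `0`;
the alphabet is `Σ = [1..σ]`. Occurrences are taken in the circular version of `T`. -/

noncomputable section
open Classical

/-- `T` is a string over the alphabet `[1..σ]` followed by the separator `# = 0`
(so `#` occurs in `T` exactly once, at the last position). -/
def Wellformed (σ : ℕ) (T : List ℕ) : Prop :=
  ∃ S : List ℕ, T = S ++ [0] ∧ ∀ c ∈ S, 1 ≤ c ∧ c ≤ σ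

/-- The rotation of `T` starting at position `i`. -/
def rot (T : List ℕ) (i : ℕ) : List ℕ := T.drop i ++ T.take i

/-- `W` occurs at position `i` of the circular version of `T`. -/
def CircOccAt (T W : List ℕ) (i : ℕ) : Prop :=
  ∀ j < W.length, W.getD j 0 = T.getD ((i + j) % T.length) 0

/-- `𝒫_T(W)`: the set of starting positions of occurrences of `W` in the circular
version of `T`. -/
def Pset (T W : List ℕ) : Finset ℕ :=
  (Finset.range T.length).filter (fun i => CircOccAt T W i)

/-- `W` occurs in the circular version of `T`. -/
def OccursCirc (T W : List ℕ) : Prop := (Pset T W).Nonempty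

/-- `Σ^ℓ_T(W)`: the set of characters `a` such that `aW` occurs in circular `T`. -/
def SigmaL (T W : List ℕ) : Finset ℕ :=
  T.toFinset.filter (fun a => OccursCirc T (a :: W))

/-- `Σ^r_T(W)`: the set of characters `b` such that `Wb` occurs in circular `T`. -/
def SigmaR (T W : List ℕ) : Finset ℕ :=
  T.toFinset.filter (fun b => OccursCirc T (W ++ [b]))

/-- `W` is left-maximal in `T`. -/
def LeftMaximal (T W : List ℕ) : Prop := 1 < (SigmaL T W).card

/-- `W` is right-maximal in `T`. -/
def RightMaximal (T W : List ℕ) : Prop := 1 < (SigmaR T W).card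

/-- The (finite) collection of substrings of the circular version of `T`. -/
def circSubstrings (T : List ℕ) : Finset (List ℕ) :=
  ((Finset.range T.length) ×ˢ (Finset.range (T.length + 1))).image
    (fun p => (rot T p.1).take p.2)

/-- `ℳ_T`: the set of nonempty maximal repeats of `T`, i.e. repeats that are both
left-maximal and right-maximal.  (Every maximal repeat occurs in circular `T` and has
length at most `|T|`, so it belongs to `circSubstrings T`.) -/
def MaxRepeats (T : List ℕ) : Finset (List ℕ) :=
  (circSubstrings T).filter
    (fun W => W ≠ [] ∧ 1 < (Pset T W).card ∧ LeftMaximal T W ∧ RightMaximal T W)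

/-- Strict lexicographic comparison of strings (a proper prefix is smaller). -/
def lexLt : List ℕ → List ℕ → Bool
  | [], [] => false
  | [], _ :: _ => true
  | _ :: _, [] => false
  | a :: A, b :: B => decide (a < b) || (a == b && lexLt A B)

/-- Non-strict lexicographic comparison. -/
def lexLe (A B : List ℕ) : Bool := !(lexLt B A)

/-- The Burrows–Wheeler transform of `T`: the `i`-th character of `BWT T` is the last
character of the lexicographically `i`-th rotation of `T`. -/
def BWT (T : List ℕ) : List ℕ :=
  (((List.range T.length).map (rot T)).mergeSort lexLe).map (fun R => R.getLast!)

/-- The number of runs of a string, i.e. the number of maximal intervals on which all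
characters are equal. -/
def numRuns : List ℕ → ℕ
  | [] => 0
  | [_] => 1
  | a :: b :: l => (if a = b then 0 else 1) + numRuns (b :: l)


noncomputable section
open Classical

/-- `ℳ^r_T`: the set of rightmost maximal repeats of `T`: maximal repeats `W` such that
no string `WV` with `V` nonempty is left-maximal in `T`. -/
def RightmostMaxRepeats (T : List ℕ) : Finset (List ℕ) :=
  (MaxRepeats T).filter (fun W => ∀ V : List ℕ, V ≠ [] → ¬ LeftMaximal T (W ++ V))

/-- `Y` is the shortest right-maximal extension of `X` in `T`: the shortest
right-maximal string of `T` having `X` as a prefix. -/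
def ShortestRightMaxExt (T X Y : List ℕ) : Prop :=
  X <+: Y ∧ RightMaximal T Y ∧
    ∀ Z : List ℕ, X <+: Z → RightMaximal T Z → Y.length ≤ Z.length

/-- `ℱ^r_T`: pairs `(V, b)` with `V ∈ ℳ_T ∪ {ε}` and `b ∈ Σ^r_T(V)` such that either
`Vb` occurs exactly once in circular `T`, or the shortest right-maximal extension of
`Vb` is not a maximal repeat of `T`.  These pairs correspond to the suffix-tree edges
of `T` from maximal-repeat nodes to non-maximal-repeat nodes. -/
def Fr (T : List ℕ) : Finset (List ℕ × ℕ) :=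
  ((insert ([] : List ℕ) (MaxRepeats T)) ×ˢ T.toFinset).filter
    (fun p => p.2 ∈ SigmaR T p.1 ∧
      ((Pset T (p.1 ++ [p.2])).card = 1 ∨
        ∀ Y : List ℕ, ShortestRightMaxExt T (p.1 ++ [p.2]) Y → Y ∉ MaxRepeats T))

/-- `e_T`: the number of right extensions of maximal repeats of `T`, i.e. the number of
pairs `(V, b)` with `V ∈ ℳ_T ∪ {ε}` and `b ∈ Σ^r_T(V)`.  This equals the number of
arcs of the CDAWG of `T`. -/
def eCount (T : List ℕ) : ℕ :=
  ∑ V ∈ insert ([] : List ℕ) (MaxRepeats T), (SigmaR T V).card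

/-- The next LZ77 factor, to be placed at position `k` of `T`, may be `F` if `F` is a
single character (every single character of `T` has a source among the `σ+1` distinct
characters virtually preceding `T`), or if `F` has an occurrence in `T` starting at a
position `j` strictly before `k`. -/
def LZsource (T : List ℕ) (k : ℕ) (F : List ℕ) : Prop :=
  F.length = 1 ∨ ∃ j, j < k ∧ F <+: T.drop j

/-- `fs` is the LZ77 factorization of `T` (greedy: each factor is the longest prefix of
the remaining suffix admitting a source). -/
def IsLZ77 (T : List ℕ) (fs : List (List ℕ)) : Prop :=
  fs.flatten = T ∧ (∀ F ∈ fs, F ≠ []) ∧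
    ∀ i, (h : i < fs.length) →
      LZsource T ((fs.take i).flatten).length (fs.get ⟨i, h⟩) ∧
      ∀ F' : List ℕ, F' <+: T.drop ((fs.take i).flatten).length →
        (fs.get ⟨i, h⟩).length < F'.length →
          ¬ LZsource T ((fs.take i).flatten).length F'

/-- `N_T(X)`: the number of rotations of `T` lexicographically smaller than `X`. -/
def Nrank (T X : List ℕ) : ℕ :=
  ((List.range T.length).filter (fun i => lexLt (rot T i) X)).length

/-- The string `a b a² b a³ b ⋯ aˣ b #`. -/
def Tx (a b x : ℕ) : List ℕ :=
  (((List.range x).map (fun i => List.replicate (i + 1) a ++ [b])).flatten) ++ [0]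

end


namespace LZAux

def tl (a b : ℕ) : ℕ → ℕ → List ℕ
  | _, 0 => [0]
  | m, c+1 => (List.replicate m a ++ [b]) ++ tl a b (m+1) c

def Hd (a b c : ℕ) : List ℕ :=
  ((List.range c).map (fun i => List.replicate (i + 1) a ++ [b])).flatten

lemma Hd_succ (a b c : ℕ) : Hd a b (c+1) = Hd a b c ++ (List.replicate (c+1) a ++ [b]) := by
  rw [Hd, Hd, List.range_succ]; simp

lemma hd_tl (a b : ℕ) : ∀ c k,
    ((List.range c).map (fun i => List.replicate (k + i + 1) a ++ [b])).flatten ++ [0]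
      = tl a b (k+1) c := by
  intro c
  induction c with
  | zero => intro k; simp [tl]
  | succ c ih =>
    intro k
    rw [List.range_succ_eq_map]
    simp only [List.map_cons, List.map_map, List.flatten_cons, List.append_assoc]
    rw [show (fun i => List.replicate (k + i + 1) a ++ [b]) ∘ (· + 1)
        = (fun i => List.replicate ((k+1) + i + 1) a ++ [b]) from by
      funext i; simp [Function.comp]; ring_nf]
    rw [ih (k+1)]
    simp [tl]

lemma Tx_eq (a b x : ℕ) : Tx a b x = tl a b 1 x := by
  rw [Tx, ← hd_tl a b x 0]
  simp

lemma split (a b x : ℕ) : ∀ c, c ≤ x → tl a b 1 x = Hd a b c ++ tl a b (c+1) (x - c) := by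
  intro c
  induction c with
  | zero => intro _; simp [Hd]
  | succ c ih =>
    intro hc
    rw [ih (le_of_lt (Nat.lt_of_succ_le hc))]
    have hx : x - c = (x - (c+1)) + 1 := by omega
    rw [hx, Hd_succ]
    show Hd a b c ++ tl a b (c + 1) (x - (c + 1) + 1) = _
    rw [show tl a b (c+1) (x - (c+1) + 1)
      = (List.replicate (c+1) a ++ [b]) ++ tl a b (c+2) (x - (c+1)) from rfl]
    simp [List.append_assoc]

lemma suffix_append_cases {α : Type*} {S L M : List α} (h : S <:+ L ++ M) :
    S <:+ M ∨ ∃ L', L' <:+ L ∧ S = L' ++ M := by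
  obtain ⟨t, ht⟩ := h
  rcases le_or_gt L.length t.length with hl | hl
  · left
    have : S = (L ++ M).drop t.length := by
      rw [← ht, List.drop_left]
    rw [this, List.drop_append, List.drop_eq_nil_of_le hl, List.nil_append]
    exact List.drop_suffix _ _
  · right
    refine ⟨L.drop t.length, List.drop_suffix _ _, ?_⟩
    have : S = (L ++ M).drop t.length := by
      rw [← ht, List.drop_left]
    rw [this, List.drop_append, Nat.sub_eq_zero_of_le (le_of_lt hl),
      List.drop_zero]

lemma suffix_replicate {α : Type*} {S : List α} {m : ℕ} {a : α}
    (h : S <:+ List.replicate m a) : S = List.replicate S.length a ∧ S.length ≤ m := by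
  constructor
  · exact List.eq_replicate_of_mem (fun c hc => by
      have := h.sublist.subset hc
      simpa using (List.eq_of_mem_replicate this))
  · simpa using h.length_le

/-- Every suffix of `tl a b m c` is `[]`, `[0]`, or `replicate q a ++ [b] ++ tl a b (m'+1) c'`. -/
lemma suf_tl (a b : ℕ) : ∀ c m S, S <:+ tl a b m c →
    S = [] ∨ S = [0] ∨ ∃ q m' c', S = List.replicate q a ++ [b] ++ tl a b (m'+1) c'
      ∧ q ≤ m' ∧ m ≤ m' ∧ m' + c' + 1 = m + c := by
  intro c
  induction c with
  | zero =>
    intro m S h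
    rcases h with ⟨t, ht⟩
    rcases S with _ | ⟨s, S⟩
    · left; rfl
    · right; left
      have := congrArg List.length ht
      simp [tl] at this ⊢
      have ht2 : t = [] := by
        rcases t with _ | _
        · rfl
        · simp at this; omega
      subst ht2; simpa [tl] using ht
  | succ c ih =>
    intro m S h
    rw [show tl a b m (c+1) = (List.replicate m a ++ [b]) ++ tl a b (m+1) c from rfl] at h
    rcases suffix_append_cases h with h1 | ⟨L', hL', rfl⟩
    · rcases ih (m+1) S h1 with h2 | h2 | ⟨q, m', c', h3, h4, h5, h6⟩
      · left; exact h2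
      · right; left; exact h2
      · right; right; exact ⟨q, m', c', h3, h4, by omega, by omega⟩
    · rcases suffix_append_cases hL' with h1 | ⟨L'', hL'', rfl⟩
      · -- L' <:+ [b] : L' = [] or [b]
        rcases List.suffix_cons_iff.mp h1 with rfl | h2
        · right; right
          exact ⟨0, m, c, by simp, Nat.zero_le _, le_refl _, by omega⟩
        · have hL0 : L' = [] := List.suffix_nil.mp h2
          subst hL0
          rw [List.nil_append]
          rcases c with _ | c
          · right; left; rfl
          · right; right
            exact ⟨m+1, m+1, c, by simp [tl], le_refl _, by omega, by omega⟩
      · obtain ⟨hrep, hlen⟩ := suffix_replicate hL''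
        right; right
        exact ⟨L''.length, m, c, by rw [hrep]; simp, hlen, le_refl _, by omega⟩

lemma tl_suf_mono (a b x : ℕ) : ∀ {i j : ℕ}, i ≤ j → j ≤ x+1 →
    tl a b j (x+1-j) <:+ tl a b i (x+1-i) := by
  intro i j hij
  induction hij with
  | refl => intro _; exact List.suffix_refl _
  | @step j hij ih =>
    intro hj
    refine List.IsSuffix.trans ?_ (ih (by omega))
    have hx : x + 1 - j = (x + 1 - (j+1)) + 1 := by omega
    rw [hx]
    exact ⟨List.replicate j a ++ [b], rfl⟩

lemma occ (a b x : ℕ) (ha : 1 ≤ a) (hab : a ≠ b) {S : List ℕ} {t : ℕ} (ht : 2 ≤ t)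
    (hS : S <:+ tl a b 1 x) (hp : (a :: b :: List.replicate t a) <+: S) :
    S.length ≤ 2 + (tl a b t (x+1-t)).length := by
  rcases suf_tl a b x 1 S hS with rfl | rfl | ⟨q, m', c', rfl, hq, hm, hc⟩
  · have := hp.length_le; simp at this
  · have := hp.length_le; simp at this
  · rcases q with _ | _ | q
    · simp only [List.replicate_zero, List.nil_append, List.cons_append] at hp
      rw [List.cons_prefix_cons] at hp
      exact absurd hp.1 hab
    · simp only [List.replicate_succ, List.replicate_zero, List.nil_append,
        List.cons_append, List.singleton_append] at hp ⊢
      rw [List.cons_prefix_cons, List.cons_prefix_cons] at hp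
      obtain ⟨-, -, hp⟩ := hp
      -- hp : List.replicate t a <+: tl a b (m'+1) c'
      rcases c' with _ | c'
      · have := hp.length_le; simp [tl] at this; omega
      · have htm : t ≤ m' + 1 := by
          by_contra hlt
          push_neg at hlt
          have h1 : List.replicate t a = List.replicate (m'+1) a ++ List.replicate (t - (m'+1)) a := by
            rw [← List.replicate_add]; congr 1; omega
          rw [h1, show tl a b (m'+1) (c'+1)
            = (List.replicate (m'+1) a ++ [b]) ++ tl a b (m'+2) c' from rfl,
            List.append_assoc, List.prefix_append_right_inj] at hp
          have h2 : t - (m'+1) = (t - (m'+1) - 1) + 1 := by omega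
          rw [h2, List.replicate_succ, List.singleton_append, List.cons_prefix_cons] at hp
          exact absurd hp.1 hab
        have hle : (tl a b (m'+1) (c'+1)).length ≤ (tl a b t (x+1-t)).length := by
          have := tl_suf_mono a b x htm (by omega)
          rw [show x + 1 - (m'+1) = c' + 1 by omega] at this
          exact this.length_le
        simp only [List.length_cons]
        omega
    · simp only [List.replicate_succ, List.cons_append] at hp
      rw [List.cons_prefix_cons, List.cons_prefix_cons] at hp
      obtain ⟨-, h2, -⟩ := hp
      exact absurd h2.symm hab

lemma occ0 (a b x : ℕ) (ha : 1 ≤ a) (hab : a ≠ b) {S : List ℕ}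
    (hS : S <:+ tl a b 1 x) (hp : [a, b, 0] <+: S) : S.length ≤ 3 := by
  rcases suf_tl a b x 1 S hS with rfl | rfl | ⟨q, m', c', rfl, hq, hm, hc⟩
  · have := hp.length_le; simp at this
  · have := hp.length_le; simp at this
  · rcases q with _ | _ | q
    · simp only [List.replicate_zero, List.nil_append, List.cons_append] at hp
      rw [List.cons_prefix_cons] at hp
      exact absurd hp.1 hab
    · simp only [List.replicate_succ, List.replicate_zero, List.nil_append,
        List.cons_append, List.singleton_append] at hp ⊢
      rw [List.cons_prefix_cons, List.cons_prefix_cons] at hp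
      obtain ⟨-, -, hp⟩ := hp
      rcases c' with _ | c'
      · simp [tl]
      · rw [show tl a b (m'+1) (c'+1)
          = (List.replicate (m'+1) a ++ [b]) ++ tl a b (m'+2) c' from rfl,
          List.replicate_succ, List.cons_append, List.cons_append,
          List.cons_prefix_cons] at hp
        omega
    · simp only [List.replicate_succ, List.cons_append] at hp
      rw [List.cons_prefix_cons, List.cons_prefix_cons] at hp
      obtain ⟨-, h2, -⟩ := hp
      exact absurd h2.symm hab

lemma flatten_split {fs : List (List ℕ)} {T : List ℕ} (h : fs.flatten = T) (i : ℕ) :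
    T = (fs.take i).flatten ++ (fs.drop i).flatten := by
  rw [← List.flatten_append, List.take_append_drop, h]

lemma flatten_take_get {fs : List (List ℕ)} {T : List ℕ} (h : fs.flatten = T) {i : ℕ}
    (hi : i < fs.length) : fs[i] <+: T.drop ((fs.take i).flatten).length := by
  rw [flatten_split h i, List.drop_left]
  rw [List.drop_eq_getElem_cons hi, List.flatten_cons]
  exact List.prefix_append _ _

lemma len_lt_of {T : List ℕ} {fs gs : List (List ℕ)} {i : ℕ}
    (hf1 : fs.flatten = T) (hg1 : gs.flatten = T) (hf2 : ∀ F ∈ fs, F ≠ [])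
    (h : fs.take i = gs.take i) (hif : i < fs.length) : i < gs.length := by
  by_contra hig
  push_neg at hig
  have hgs : gs.take i = gs := List.take_of_length_le hig
  have h1 : T.length = ((fs.take i).flatten).length := by
    rw [h, hgs, hg1]
  have h2 := congrArg List.length (flatten_split hf1 i)
  have h3 : (fs.drop i).flatten ≠ [] := by
    rw [List.drop_eq_getElem_cons hif, List.flatten_cons]
    intro hc
    rcases List.append_eq_nil_iff.mp hc with ⟨hc1, -⟩
    exact hf2 _ (List.getElem_mem hif) hc1
  have h4 : 0 < (fs.drop i).flatten.length := List.length_pos_iff.mpr h3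
  rw [List.length_append] at h2
  omega

lemma lz_unique {T : List ℕ} {fs gs : List (List ℕ)}
    (hf : IsLZ77 T fs) (hg : IsLZ77 T gs) : fs = gs := by
  obtain ⟨hf1, hf2, hf3⟩ := hf
  obtain ⟨hg1, hg2, hg3⟩ := hg
  have key : ∀ i, fs.take i = gs.take i := by
    intro i
    induction i with
    | zero => rfl
    | succ i ih =>
      by_cases hif : i < fs.length
      · have hig : i < gs.length := len_lt_of hf1 hg1 hf2 ih hif
        have hk : ((gs.take i).flatten).length = ((fs.take i).flatten).length := by rw [ih]
        have hpf : fs[i] <+: T.drop ((fs.take i).flatten).length := flatten_take_get hf1 hif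
        have hpg : gs[i] <+: T.drop ((fs.take i).flatten).length := by
          rw [← hk]; exact flatten_take_get hg1 hig
        have hsf : LZsource T ((fs.take i).flatten).length fs[i] := by
          have := (hf3 i hif).1; simpa using this
        have hsg : LZsource T ((fs.take i).flatten).length gs[i] := by
          have := (hg3 i hig).1; rw [hk] at this; simpa using this
        have hmf := (hf3 i hif).2
        have hmg := (hg3 i hig).2
        rw [hk] at hmg
        simp only [List.get_eq_getElem] at hmf hmg
        have h1 : fs[i].length ≤ gs[i].length := by
          by_contra hlt
          push_neg at hlt
          exact hmg fs[i] hpf hlt hsf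
        have h2 : gs[i].length ≤ fs[i].length := by
          by_contra hlt
          push_neg at hlt
          exact hmf gs[i] hpg hlt hsg
        have heq : fs[i] = gs[i] := by
          have := List.prefix_of_prefix_length_le hpf hpg (by omega)
          exact this.eq_of_length (by omega)
        rw [List.take_succ, List.take_succ, ih]
        congr 1
        rw [List.getElem?_eq_getElem hif, List.getElem?_eq_getElem hig, heq]
      · have hig : ¬ i < gs.length := fun h => hif (len_lt_of hg1 hf1 hg2 ih.symm h)
        push_neg at hif hig
        rw [List.take_of_length_le (by omega), List.take_of_length_le (by omega),
          ← List.take_of_length_le hif, ← List.take_of_length_le hig, ih]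
  have := key (max fs.length gs.length)
  rwa [List.take_of_length_le (le_max_left _ _),
    List.take_of_length_le (le_max_right _ _)] at this

def facs (a b x : ℕ) : List (List ℕ) :=
  [[a],[b],[a]] ++ ((List.range (x-2)).map (fun j => a :: b :: List.replicate (j+2) a)
    ++ [[a,b],[0]])

lemma facs_length (a b x : ℕ) (hx : 2 ≤ x) : (facs a b x).length = x + 3 := by
  simp [facs]; omega

lemma inv (a b : ℕ) : ∀ j, ([a,b,a] : List ℕ)
    ++ ((List.range j).map (fun i => a :: b :: List.replicate (i+2) a)).flatten
    = Hd a b (j+1) ++ List.replicate (j+1) a := by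
  intro j
  induction j with
  | zero => simp [Hd, List.range_succ, List.replicate]
  | succ j ih =>
    rw [List.range_succ, List.map_append, List.flatten_append, ← List.append_assoc, ih,
      show Hd a b (j+1+1) = Hd a b (j+1) ++ (List.replicate (j+1+1) a ++ [b]) from
        Hd_succ a b (j+1)]
    simp [List.replicate_succ', List.append_assoc]

lemma DEC (a b x j d : ℕ) (hjd : j + d + 2 = x) :
    tl a b 1 x = (Hd a b (j+1) ++ List.replicate (j+1) a) ++ (a :: b :: tl a b (j+3) d) := by
  rw [split a b x (j+1) (by omega), show x - (j+1) = d + 1 by omega,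
    show tl a b (j+2) (d+1) = (List.replicate (j+2) a ++ [b]) ++ tl a b (j+3) d from rfl,
    show (j+2) = (j+1)+1 from rfl, List.replicate_succ']
  simp [List.append_assoc]

lemma hT5 (a b x : ℕ) (hx : 2 ≤ x) :
    tl a b 1 x = a :: b :: ((List.replicate 2 a ++ [b]) ++ tl a b 3 (x-2)) := by
  have := DEC a b x 0 (x-2) (by omega)
  rw [this]
  simp [Hd, List.range_succ, List.replicate]

lemma take_facs (a b x : ℕ) (hx : 2 ≤ x) {j : ℕ} (hj : j ≤ x-2) :
    (((facs a b x).take (3+j)).flatten) = Hd a b (j+1) ++ List.replicate (j+1) a := by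
  rw [facs, show (3 : ℕ) + j = ([[a],[b],[a]] : List (List ℕ)).length + j from rfl,
    List.take_length_add_append, List.take_append_of_le_length (by simp; omega),
    ← List.map_take, List.take_range, show min j (x-2) = j by omega]
  rw [← inv a b j]
  simp

lemma take_facs_last (a b x : ℕ) (hx : 2 ≤ x) :
    (((facs a b x).take (x+2)).flatten)
      = (Hd a b (x-1) ++ List.replicate (x-1) a) ++ [a, b] := by
  rw [facs, show x + 2 = ([[a],[b],[a]] : List (List ℕ)).length + (x-1) by simp; omega,
    List.take_length_add_append, List.take_append,
    List.take_of_length_le (by simp; omega),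
    show x - 1 - (((List.range (x-2)).map
      (fun j => a :: b :: List.replicate (j+2) a))).length = 1 by simp; omega]
  have h := inv a b (x-2)
  rw [show x - 2 + 1 = x - 1 by omega] at h
  rw [← h]
  simp

lemma get_mid (a b x : ℕ) {j : ℕ} (hj : j < x - 2) (h : 3+j < (facs a b x).length) :
    (facs a b x)[3+j] = a :: b :: List.replicate (j+2) a := by
  have h0 : (facs a b x)[3+j]? = some (a :: b :: List.replicate (j+2) a) := by
    rw [facs, List.getElem?_append_right (by simp),
      show (3 + j) - ([[a],[b],[a]] : List (List ℕ)).length = j by simp,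
      List.getElem?_append_left (by simp; omega), List.getElem?_map,
      List.getElem?_range (by omega)]
    rfl
  rw [List.getElem?_eq_getElem h] at h0
  simpa using h0

lemma get_ab (a b x : ℕ) (hx : 2 ≤ x) (h : 3+(x-2) < (facs a b x).length) :
    (facs a b x)[3+(x-2)] = [a, b] := by
  have h0 : (facs a b x)[3+(x-2)]? = some [a, b] := by
    rw [facs, List.getElem?_append_right (by simp),
      show (3 + (x-2)) - ([[a],[b],[a]] : List (List ℕ)).length = x - 2 by simp,
      List.getElem?_append_right (by simp),
      show x - 2 - (((List.range (x-2)).map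
        (fun j => a :: b :: List.replicate (j+2) a))).length = 0 by simp]
    rfl
  rw [List.getElem?_eq_getElem h] at h0
  simpa using h0

lemma get_last (a b x : ℕ) (hx : 2 ≤ x) (h : 3+(x-1) < (facs a b x).length) :
    (facs a b x)[3+(x-1)] = [0] := by
  have h0 : (facs a b x)[3+(x-1)]? = some [0] := by
    rw [facs, List.getElem?_append_right (by simp),
      show (3 + (x-1)) - ([[a],[b],[a]] : List (List ℕ)).length = x - 1 by simp,
      List.getElem?_append_right (by simp; omega),
      show x - 1 - (((List.range (x-2)).map
        (fun j => a :: b :: List.replicate (j+2) a))).length = 1 by simp; omega]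
    rfl
  rw [List.getElem?_eq_getElem h] at h0
  simpa using h0

lemma flatten_facs (a b x : ℕ) (hx : 2 ≤ x) : (facs a b x).flatten = tl a b 1 x := by
  have h := inv a b (x-2)
  have hdec := DEC a b x (x-2) 0 (by omega)
  rw [hdec, ← h]
  simp [facs, show tl a b (x-2+3) 0 = [0] from rfl, List.append_assoc]

lemma isLZ77_facs (a b x : ℕ) (ha : 1 ≤ a) (hab : a < b) (hx : 2 ≤ x) :
    IsLZ77 (Tx a b x) (facs a b x) := by
  have hne : a ≠ b := Nat.ne_of_lt hab
  rw [Tx_eq]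
  refine ⟨flatten_facs a b x hx, ?_, ?_⟩
  · intro F hF
    rw [facs] at hF
    simp only [List.mem_append, List.mem_cons, List.mem_map, List.mem_range,
      List.not_mem_nil, or_false] at hF
    rcases hF with (rfl | rfl | rfl) | ⟨j, -, rfl⟩ | rfl | rfl <;> simp
  · intro i hi
    simp only [List.get_eq_getElem]
    rw [facs_length a b x hx] at hi
    have hT := hT5 a b x hx
    by_cases hi3 : i < 3
    · interval_cases i
      · -- i = 0, factor [a]
        refine ⟨Or.inl rfl, ?_⟩
        intro F' hF' hlen hsrc
        rcases hsrc with h1 | ⟨j', hj', -⟩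
        · rw [show (facs a b x)[0] = [a] from rfl] at hlen
          simp at hlen; omega
        · exact absurd hj' (Nat.not_lt_zero _)
      · -- i = 1, factor [b]
        refine ⟨Or.inl rfl, ?_⟩
        intro F' hF' hlen hsrc
        rw [show (facs a b x)[1] = [b] from rfl] at hlen
        rcases hsrc with h1 | ⟨j', hj', hp⟩
        · simp at hlen; omega
        · have hj0 : j' = 0 := by
            rw [show ((((facs a b x).take 1).flatten).length) = 1 from rfl] at hj'
            omega
          subst hj0
          rw [List.drop_zero] at hp
          rcases F' with _ | ⟨c, F''⟩
          · simp at hlen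
          · rw [hT] at hp hF'
            rw [show ((((facs a b x).take 1).flatten).length) = 1 from rfl] at hF'
            simp only [List.drop_succ_cons, List.drop_zero] at hF'
            rw [List.cons_prefix_cons] at hp hF'
            exact hne (hp.1.symm.trans hF'.1)
      · -- i = 2, factor [a]
        refine ⟨Or.inl rfl, ?_⟩
        intro F' hF' hlen hsrc
        rw [show (facs a b x)[2] = [a] from rfl] at hlen
        rcases F' with _ | ⟨c, F''⟩
        · simp at hlen
        · rcases F'' with _ | ⟨d, F3⟩
          · simp at hlen
          · rw [show ((((facs a b x).take 2).flatten).length) = 2 from rfl] at hF'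
            rw [hT] at hF'
            simp only [List.drop_succ_cons, List.drop_zero] at hF'
            have hF'2 : c :: d :: F3 <+: a :: a :: ([b] ++ tl a b 3 (x-2)) := by
              simpa [List.replicate, List.append_assoc] using hF'
            rw [List.cons_prefix_cons, List.cons_prefix_cons] at hF'2
            obtain ⟨hca, hda, -⟩ := hF'2
            rcases hsrc with h1 | ⟨j', hj', hp⟩
            · simp at h1
            · have hj2 : j' = 0 ∨ j' = 1 := by
                rw [show ((((facs a b x).take 2).flatten).length) = 2 from rfl] at hj'
                omega
              rcases hj2 with rfl | rfl
              · rw [List.drop_zero, hT, List.cons_prefix_cons, List.cons_prefix_cons] at hp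
                exact hne (hda.symm.trans hp.2.1)
              · rw [hT] at hp
                simp only [List.drop_succ_cons, List.drop_zero] at hp
                rw [List.cons_prefix_cons] at hp
                exact hne (hca.symm.trans hp.1)
    · -- i ≥ 3
      push_neg at hi3
      obtain ⟨j, rfl⟩ : ∃ j, i = 3 + j := ⟨i - 3, by omega⟩
      have hjx : j < x := by omega
      rcases show j < x - 2 ∨ j = x - 2 ∨ j = x - 1 by omega with hc | hc | hc
      · -- middle factor a b a^{j+2}
        have hkval := take_facs a b x hx (le_of_lt hc)
        have hget := get_mid a b x hc (by rw [facs_length a b x hx]; omega)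
        have hdec := DEC a b x j (x-j-2) (by omega)
        have hdropk : (tl a b 1 x).drop ((((facs a b x).take (3+j)).flatten).length)
            = a :: b :: tl a b (j+3) (x-j-2) := by
          rw [hkval, hdec, List.drop_left]
        have hexp : tl a b (j+3) (x-j-2)
            = (List.replicate (j+3) a ++ [b]) ++ tl a b (j+4) (x-j-3) := by
          rw [show x-j-2 = (x-j-3)+1 by omega]
          rfl
        constructor
        · rw [hget]
          right
          rcases Nat.eq_zero_or_pos j with rfl | hj1
          · refine ⟨0, ?_, ?_⟩
            · rw [hkval]; simp
            · rw [List.drop_zero, hT]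
              refine List.cons_prefix_cons.mpr ⟨rfl, List.cons_prefix_cons.mpr ⟨rfl, ?_⟩⟩
              rw [List.append_assoc]
              exact List.prefix_append _ _
          · have hdec' := DEC a b x (j-1) (x-j-1) (by omega)
            refine ⟨(Hd a b ((j-1)+1) ++ List.replicate ((j-1)+1) a).length, ?_, ?_⟩
            · have e1 : Hd a b (j+1)
                  = Hd a b ((j-1)+1) ++ (List.replicate (((j-1)+1)+1) a ++ [b]) := by
                rw [show j+1 = ((j-1)+1)+1 by omega]
                exact Hd_succ a b ((j-1)+1)
              rw [hkval, e1]
              simp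
              omega
            · rw [hdec', List.drop_left]
              have he2 : tl a b ((j-1)+1+2) (x-j-1)
                  = (List.replicate (j+2) a ++ [b]) ++ tl a b (j+3) (x-j-2) := by
                rw [show x-j-1 = (x-j-2)+1 by omega, show (j-1)+1+2 = j+2 by omega]
                rfl
              rw [he2]
              refine List.cons_prefix_cons.mpr ⟨rfl, List.cons_prefix_cons.mpr ⟨rfl, ?_⟩⟩
              rw [List.append_assoc]
              exact List.prefix_append _ _
        · intro F' hF' hlen hsrc
          rw [hget] at hlen
          simp only [List.length_cons, List.length_replicate] at hlen
          rw [hdropk, hexp] at hF'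
          have hPd : (a :: b :: List.replicate (j+3) a)
              <+: a :: b :: ((List.replicate (j+3) a ++ [b]) ++ tl a b (j+4) (x-j-3)) := by
            refine List.cons_prefix_cons.mpr ⟨rfl, List.cons_prefix_cons.mpr ⟨rfl, ?_⟩⟩
            rw [List.append_assoc]
            exact List.prefix_append _ _
          have hPF : (a :: b :: List.replicate (j+3) a) <+: F' :=
            List.prefix_of_prefix_length_le hPd hF' (by simp; omega)
          rcases hsrc with h1 | ⟨j', hj', hp⟩
          · omega
          · have hPj : (a :: b :: List.replicate (j+3) a) <+: (tl a b 1 x).drop j' :=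
              hPF.trans hp
            have hoc := occ a b x ha hne (t := j+3) (by omega)
              (List.drop_suffix _ _) hPj
            rw [show x + 1 - (j+3) = x - j - 2 by omega] at hoc
            have hTlen := congrArg List.length hdec
            rw [hkval] at hj'
            simp only [List.length_append, List.length_cons, List.length_replicate,
              List.length_drop] at hoc hTlen hj'
            omega
      · -- factor [a,b]
        subst hc
        have hkval := take_facs a b x hx (j := x-2) le_rfl
        have hget := get_ab a b x hx (by rw [facs_length a b x hx]; omega)
        have hdec := DEC a b x (x-2) 0 (by omega)
        have hdropk : (tl a b 1 x).drop ((((facs a b x).take (3+(x-2))).flatten).length)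
            = [a, b, 0] := by
          rw [hkval, hdec, List.drop_left]
          rfl
        constructor
        · rw [hget]
          right
          refine ⟨0, ?_, ?_⟩
          · rw [hkval]; simp
          · rw [List.drop_zero, hT]
            exact List.cons_prefix_cons.mpr ⟨rfl, List.cons_prefix_cons.mpr
              ⟨rfl, List.nil_prefix⟩⟩
        · intro F' hF' hlen hsrc
          rw [hget] at hlen
          simp only [List.length_cons, List.length_nil] at hlen
          rw [hdropk] at hF'
          have hflen := hF'.length_le
          simp only [List.length_cons, List.length_nil] at hflen
          have hF'eq : F' = [a, b, 0] := hF'.eq_of_length (by simp; omega)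
          subst hF'eq
          rcases hsrc with h1 | ⟨j', hj', hp⟩
          · simp at h1
          · have hoc := occ0 a b x ha hne (List.drop_suffix _ _) hp
            have hTlen := congrArg List.length hdec
            rw [hkval] at hj'
            simp only [List.length_append, List.length_cons, List.length_replicate,
              List.length_drop, show tl a b (x-2+3) 0 = [0] from rfl,
              List.length_nil] at hoc hTlen hj'
            omega
      · -- factor [0]
        subst hc
        have hkval := take_facs_last a b x hx
        have hget := get_last a b x hx (by rw [facs_length a b x hx]; omega)
        have hdec := DEC a b x (x-2) 0 (by omega)
        rw [show x-2+1 = x-1 by omega] at hdec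
        have hdec2 : tl a b 1 x
            = ((Hd a b (x-1) ++ List.replicate (x-1) a) ++ [a, b]) ++ [0] := by
          rw [hdec]
          simp [show tl a b (x-2+3) 0 = [0] from rfl, List.append_assoc]
        have htake : ((facs a b x).take (3+(x-1))) = (facs a b x).take (x+2) := by
          rw [show 3+(x-1) = x+2 by omega]
        have hdropk : (tl a b 1 x).drop ((((facs a b x).take (3+(x-1))).flatten).length)
            = [0] := by
          rw [htake, hkval, hdec2, List.drop_left]
        constructor
        · rw [hget]
          exact Or.inl rfl
        · intro F' hF' hlen hsrc
          rw [hget] at hlen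
          rw [hdropk] at hF'
          have := hF'.length_le
          simp at hlen this
          omega


end LZAux

/-- For distinct characters `a < b` of `Σ` and `x ≥ 2`, the LZ77
factorization of `T_x = a b a² b ⋯ aˣ b #` has exactly `x + 3` factors. -/
theorem lz_of_Tx (a b x : ℕ) (ha : 1 ≤ a) (hab : a < b) (hx : 2 ≤ x)
    (fs : List (List ℕ)) (hfs : IsLZ77 (Tx a b x) fs) :
    fs.length = x + 3 := by
  rw [LZAux.lz_unique hfs (LZAux.isLZ77_facs a b x ha hab hx),
    LZAux.facs_length a b x hx]
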